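/- Let G be a finite simple graph with N10 ≥ 1 four-cliques, and let k10 be the maximum number of 4-cliques of G sharing a common edge. Fix reals 0 < p ≤ 1 and ε > 0, and let Y10 be the number of 4-cliques of the random subgraph G̃ obtained by retaining each edge of G independently with probability p. Then P( |Y10 − p^6 · N10| ≥ ε · N10 ) ≤ 2 · exp( −2 ε² N10 / k10 ). -/

import Mathlib

set_option linter.unusedSectionVars false
set_option maxHeartbeats 1000000

open Finset

namespace FPS

section Abstract

variable {ι : Type*} [Fintype ι] [DecidableEq ι]

/-- Expectation over the finite product space `ι → Bool` with weights `w`. -/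
def Ex (w : ι → Bool → ℝ) (f : (ι → Bool) → ℝ) : ℝ :=
  ∑ ω : ι → Bool, (∏ i, w i (ω i)) * f ω

section Basic

variable {w : ι → Bool → ℝ}

lemma weight_nonneg (hw0 : ∀ i b, 0 ≤ w i b) (ω : ι → Bool) :
    0 ≤ ∏ i, w i (ω i) :=
  Finset.prod_nonneg fun i _ => hw0 i (ω i)

lemma Ex_nonneg (hw0 : ∀ i b, 0 ≤ w i b) {f : (ι → Bool) → ℝ}
    (hf : ∀ ω, 0 ≤ f ω) : 0 ≤ Ex w f :=
  Finset.sum_nonneg fun ω _ => mul_nonneg (weight_nonneg hw0 ω) (hf ω)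

lemma Ex_mono (hw0 : ∀ i b, 0 ≤ w i b) {f g : (ι → Bool) → ℝ}
    (h : ∀ ω, f ω ≤ g ω) : Ex w f ≤ Ex w g :=
  Finset.sum_le_sum fun ω _ => mul_le_mul_of_nonneg_left (h ω) (weight_nonneg hw0 ω)

lemma Ex_const (hw1 : ∀ i, w i true + w i false = 1) (c : ℝ) :
    Ex w (fun _ => c) = c := by
  unfold Ex
  rw [← Finset.sum_mul]
  have : ∑ ω : ι → Bool, ∏ i, w i (ω i) = 1 := by
    rw [← Fintype.prod_sum]
    simp only [Fintype.sum_bool]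
    rw [Finset.prod_congr rfl fun i _ => hw1 i, Finset.prod_const_one]
  rw [this, one_mul]

lemma Ex_add (w : ι → Bool → ℝ) (f g : (ι → Bool) → ℝ) :
    Ex w (fun ω => f ω + g ω) = Ex w f + Ex w g := by
  unfold Ex
  rw [← Finset.sum_add_distrib]
  exact Finset.sum_congr rfl fun ω _ => mul_add _ _ _

lemma Ex_smul (w : ι → Bool → ℝ) (c : ℝ) (f : (ι → Bool) → ℝ) :
    Ex w (fun ω => c * f ω) = c * Ex w f := by
  unfold Ex
  rw [Finset.mul_sum]
  exact Finset.sum_congr rfl fun ω _ => by ring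

end Basic

section Avg

variable {w : ι → Bool → ℝ}

/-- Extend a function off `e` by a value at `e`. -/
def ext (e : ι) (b : Bool) (σ : {j // j ≠ e} → Bool) : ι → Bool :=
  fun j => if h : j = e then b else σ ⟨j, h⟩

lemma ext_eq_symm (e : ι) (b : Bool) (σ : {j // j ≠ e} → Bool) :
    (Equiv.funSplitAt e Bool).symm (b, σ) = ext e b σ := by
  funext j
  simp only [Equiv.funSplitAt, Equiv.piSplitAt, Equiv.coe_fn_symm_mk, ext]
  split_ifs with h
  · subst h; rfl
  · rfl

lemma update_ext (e : ι) (b c : Bool) (σ : {j // j ≠ e} → Bool) :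
    Function.update (ext e b σ) e c = ext e c σ := by
  funext j
  by_cases h : j = e
  · subst h; simp [ext]
  · simp [Function.update_of_ne h, ext, h]

lemma prod_ext (e : ι) (b : Bool) (σ : {j // j ≠ e} → Bool) :
    ∏ i, w i (ext e b σ i) = w e b * ∏ j : {j // j ≠ e}, w j (σ j) := by
  calc ∏ i, w i (ext e b σ i)
      = w e (ext e b σ e) * ∏ j ∈ Finset.univ.erase e, w j (ext e b σ j) :=
        (Finset.mul_prod_erase Finset.univ _ (Finset.mem_univ e)).symm
    _ = w e b * ∏ j : {j // j ≠ e}, w (j : ι) (σ j) := by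
        congr 1
        · simp [ext]
        · rw [Finset.prod_subtype (p := fun j => j ≠ e) (Finset.univ.erase e)
            (fun j => by simp) (fun j => w j (ext e b σ j))]
          exact Finset.prod_congr rfl fun j _ => by simp [ext, j.2]

/-- Expectation can be computed by first averaging over coordinate `e`. -/
lemma Ex_avg (hw1 : ∀ i, w i true + w i false = 1) (e : ι) (f : (ι → Bool) → ℝ) :
    Ex w f = Ex w (fun ω =>
      w e true * f (Function.update ω e true) +
      w e false * f (Function.update ω e false)) := by
  have key : ∀ g : (ι → Bool) → ℝ, Ex w g =
      ∑ b : Bool, ∑ σ : {j // j ≠ e} → Bool,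
        (w e b * ∏ j : {j // j ≠ e}, w j (σ j)) * g (ext e b σ) := by
    intro g
    unfold Ex
    rw [← Equiv.sum_comp (Equiv.funSplitAt e Bool).symm
      (fun ω => (∏ i, w i (ω i)) * g ω), Fintype.sum_prod_type]
    exact Finset.sum_congr rfl fun b _ => Finset.sum_congr rfl fun σ _ => by
      rw [ext_eq_symm, prod_ext]
  rw [key f, key _]
  have expand : ∀ b : Bool, ∀ σ : {j // j ≠ e} → Bool,
      (w e b * ∏ j : {j // j ≠ e}, w j (σ j)) *
        (w e true * f (Function.update (ext e b σ) e true) +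
         w e false * f (Function.update (ext e b σ) e false)) =
      w e b * ((∏ j : {j // j ≠ e}, w j (σ j)) *
        (w e true * f (ext e true σ) + w e false * f (ext e false σ))) := by
    intro b σ
    rw [update_ext, update_ext]; ring
  calc ∑ b : Bool, ∑ σ : {j // j ≠ e} → Bool,
        (w e b * ∏ j : {j // j ≠ e}, w j (σ j)) * f (ext e b σ)
      = ∑ σ : {j // j ≠ e} → Bool, (∏ j : {j // j ≠ e}, w j (σ j)) *
          (w e true * f (ext e true σ) + w e false * f (ext e false σ)) := by
        rw [Fintype.sum_bool, ← Finset.sum_add_distrib]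
        exact Finset.sum_congr rfl fun σ _ => by ring
    _ = ∑ b : Bool, ∑ σ : {j // j ≠ e} → Bool,
        (w e b * ∏ j : {j // j ≠ e}, w j (σ j)) *
          (w e true * f (Function.update (ext e b σ) e true) +
           w e false * f (Function.update (ext e b σ) e false)) := by
        rw [Fintype.sum_bool]
        simp only [expand]
        rw [← one_mul (∑ σ : {j // j ≠ e} → Bool, _)]
        rw [← hw1 e, add_mul, Finset.mul_sum, Finset.mul_sum]

end Avg


lemma Ex_congr {w : ι → Bool → ℝ} {f g : (ι → Bool) → ℝ} (h : ∀ ω, f ω = g ω) :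
    Ex w f = Ex w g := by
  unfold Ex; exact Finset.sum_congr rfl fun ω _ => by rw [h ω]

/-- Independence: expectation of a product over coordinates factorizes. -/
lemma Ex_prod {w : ι → Bool → ℝ} (hw1 : ∀ i, w i true + w i false = 1)
    (s : Finset ι) (f : ι → Bool → ℝ) :
    Ex w (fun ω => ∏ i ∈ s, f i (ω i)) =
      ∏ i ∈ s, (w i true * f i true + w i false * f i false) := by
  induction s using Finset.induction_on with
  | empty => simpa using Ex_const hw1 1
  | @insert e s he ih =>
    have hupd : ∀ (ω : ι → Bool) (b : Bool),
        ∏ i ∈ insert e s, f i ((Function.update ω e b) i) =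
        f e b * ∏ i ∈ s, f i (ω i) := by
      intro ω b
      rw [Finset.prod_insert he, Function.update_self]
      congr 1
      refine Finset.prod_congr rfl fun i hi => ?_
      rw [Function.update_of_ne (by rintro rfl; exact he hi)]
    calc Ex w (fun ω => ∏ i ∈ insert e s, f i (ω i))
        = Ex w (fun ω =>
            w e true * ∏ i ∈ insert e s, f i ((Function.update ω e true) i) +
            w e false * ∏ i ∈ insert e s, f i ((Function.update ω e false) i)) :=
          Ex_avg hw1 e _
      _ = Ex w (fun ω => (w e true * f e true + w e false * f e false) *
            ∏ i ∈ s, f i (ω i)) :=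
          Ex_congr (fun ω => by rw [hupd ω true, hupd ω false]; ring)
      _ = (w e true * f e true + w e false * f e false) *
            ∏ i ∈ s, (w i true * f i true + w i false * f i false) := by
          rw [Ex_smul, ih]
      _ = ∏ i ∈ insert e s, (w i true * f i true + w i false * f i false) := by
          rw [Finset.prod_insert he]

end Abstract

section AMGM

variable {α : Type*}

/-- Weighted AM-GM with total weight `card F / k ≤ 1`, padded by `1`. -/
lemma amgm_pad (k : ℕ) (hk : 0 < k) (F : Finset α) (hF : F.card ≤ k)
    (z : α → ℝ) (hz : ∀ a ∈ F, 0 ≤ z a) :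
    ∏ a ∈ F, z a ≤ (1 - F.card / k) + (∑ a ∈ F, z a ^ k) / k := by
  have hkR : (0:ℝ) < k := by exact_mod_cast hk
  have hcard : (F.card : ℝ) / k ≤ 1 := by
    rw [div_le_one hkR]; exact_mod_cast hF
  have key := Real.geom_mean_le_arith_mean_weighted (Finset.insertNone F)
    (fun o => o.elim (1 - F.card / k) (fun _ => 1 / k))
    (fun o => o.elim 1 (fun a => z a ^ k))
    (fun o _ => by
      cases o with
      | none => simpa using hcard
      | some a => simp only [Option.elim]; positivity)
    (by
      rw [Finset.sum_insertNone]
      simp only [Option.elim]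
      rw [Finset.sum_const, nsmul_eq_mul]
      field_simp
      ring)
    (fun o ho => by
      cases o with
      | none => exact zero_le_one
      | some a =>
          simp only [Option.elim]
          exact pow_nonneg (hz a (by simpa using ho)) k)
  rw [Finset.prod_insertNone, Finset.sum_insertNone] at key
  simp only [Option.elim] at key
  rw [Real.one_rpow, one_mul] at key
  calc ∏ a ∈ F, z a = ∏ a ∈ F, (z a ^ k) ^ ((1:ℝ) / k) := by
        refine Finset.prod_congr rfl fun a ha => ?_
        rw [← Real.rpow_natCast (z a) k, ← Real.rpow_mul (hz a ha), mul_one_div,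
          div_self (ne_of_gt hkR), Real.rpow_one]
    _ ≤ (1 - F.card / k) * 1 + ∑ a ∈ F, 1 / k * z a ^ k := key
    _ = (1 - F.card / k) + (∑ a ∈ F, z a ^ k) / k := by
        rw [mul_one, Finset.sum_div]
        congr 1
        exact Finset.sum_congr rfl fun a _ => by ring

/-- Two-point Hölder inequality with `card F ≤ k` functions and exponents all `k`. -/
lemma holder_two_point (k : ℕ) (hk : 0 < k) (F : Finset α) (hF : F.card ≤ k)
    (wt wf : ℝ) (hwt : 0 ≤ wt) (hwf : 0 ≤ wf) (hw1 : wt + wf = 1)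
    (u v : α → ℝ) (hu : ∀ a ∈ F, 0 ≤ u a) (hv : ∀ a ∈ F, 0 ≤ v a) :
    wt * ∏ a ∈ F, u a + wf * ∏ a ∈ F, v a ≤
      ∏ a ∈ F, (wt * u a ^ k + wf * v a ^ k) ^ ((1:ℝ) / k) := by
  have hkR : (0:ℝ) < k := by exact_mod_cast hk
  set n : α → ℝ := fun a => (wt * u a ^ k + wf * v a ^ k) ^ ((1:ℝ) / k) with hn
  have hbase : ∀ a ∈ F, 0 ≤ wt * u a ^ k + wf * v a ^ k := fun a ha =>
    add_nonneg (mul_nonneg hwt (pow_nonneg (hu a ha) k))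
      (mul_nonneg hwf (pow_nonneg (hv a ha) k))
  have hn0 : ∀ a ∈ F, 0 ≤ n a := fun a ha => Real.rpow_nonneg (hbase a ha) _
  have hnpow : ∀ a ∈ F, n a ^ k = wt * u a ^ k + wf * v a ^ k := fun a ha => by
    rw [hn]
    rw [← Real.rpow_natCast ((wt * u a ^ k + wf * v a ^ k) ^ ((1:ℝ)/k)) k,
      ← Real.rpow_mul (hbase a ha), one_div, inv_mul_cancel₀ (ne_of_gt hkR),
      Real.rpow_one]
  by_cases hzero : ∃ a ∈ F, n a = 0
  · obtain ⟨a0, ha0F, ha0⟩ := hzero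
    have hbase0 : wt * u a0 ^ k + wf * v a0 ^ k = 0 := by
      have := hnpow a0 ha0F
      rw [ha0] at this
      rw [← this, zero_pow hk.ne']
    have h1 : wt * u a0 ^ k = 0 := by
      have h2 := mul_nonneg hwt (pow_nonneg (hu a0 ha0F) k)
      have h3 := mul_nonneg hwf (pow_nonneg (hv a0 ha0F) k)
      linarith
    have h2 : wf * v a0 ^ k = 0 := by
      have h2 := mul_nonneg hwt (pow_nonneg (hu a0 ha0F) k)
      have h3 := mul_nonneg hwf (pow_nonneg (hv a0 ha0F) k)
      linarith
    have hL1 : wt * ∏ a ∈ F, u a = 0 := by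
      rcases mul_eq_zero.mp h1 with h | h
      · rw [h, zero_mul]
      · rw [Finset.prod_eq_zero ha0F (pow_eq_zero_iff hk.ne' |>.mp h),
          mul_zero]
    have hL2 : wf * ∏ a ∈ F, v a = 0 := by
      rcases mul_eq_zero.mp h2 with h | h
      · rw [h, zero_mul]
      · rw [Finset.prod_eq_zero ha0F (pow_eq_zero_iff hk.ne' |>.mp h),
          mul_zero]
    rw [hL1, hL2, add_zero]
    exact Finset.prod_nonneg hn0
  · push_neg at hzero
    have hnpos : ∀ a ∈ F, 0 < n a := fun a ha =>
      lt_of_le_of_ne (hn0 a ha) (Ne.symm (hzero a ha))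
    have hPpos : 0 < ∏ a ∈ F, n a := Finset.prod_pos hnpos
    -- key : normalized inequality
    have hkey : wt * ∏ a ∈ F, (u a / n a) + wf * ∏ a ∈ F, (v a / n a) ≤ 1 := by
      have hAu := amgm_pad k hk F hF (fun a => u a / n a)
        (fun a ha => div_nonneg (hu a ha) (hn0 a ha))
      have hAv := amgm_pad k hk F hF (fun a => v a / n a)
        (fun a ha => div_nonneg (hv a ha) (hn0 a ha))
      have hsum : wt * (∑ a ∈ F, (u a / n a) ^ k) + wf * (∑ a ∈ F, (v a / n a) ^ k)
          = F.card := by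
        rw [Finset.mul_sum, Finset.mul_sum, ← Finset.sum_add_distrib]
        rw [Finset.sum_congr rfl (g := fun _ => (1:ℝ)) (fun a ha => ?_)]
        · rw [Finset.sum_const, nsmul_eq_mul, mul_one]
        · rw [div_pow, div_pow, ← mul_div_assoc, ← mul_div_assoc, ← add_div,
            ← hnpow a ha, div_self (pow_ne_zero k (ne_of_gt (hnpos a ha)))]
      calc wt * ∏ a ∈ F, (u a / n a) + wf * ∏ a ∈ F, (v a / n a)
          ≤ wt * ((1 - F.card / k) + (∑ a ∈ F, (u a / n a) ^ k) / k)
            + wf * ((1 - F.card / k) + (∑ a ∈ F, (v a / n a) ^ k) / k) :=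
            add_le_add (mul_le_mul_of_nonneg_left hAu hwt)
              (mul_le_mul_of_nonneg_left hAv hwf)
        _ = (wt + wf) * (1 - F.card / k)
            + (wt * (∑ a ∈ F, (u a / n a) ^ k) + wf * (∑ a ∈ F, (v a / n a) ^ k)) / k := by
            ring
        _ = 1 := by rw [hw1, hsum]; field_simp; ring
    have hprodu : ∏ a ∈ F, (u a / n a) = (∏ a ∈ F, u a) / ∏ a ∈ F, n a :=
      Finset.prod_div_distrib _ _
    have hprodv : ∏ a ∈ F, (v a / n a) = (∏ a ∈ F, v a) / ∏ a ∈ F, n a :=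
      Finset.prod_div_distrib _ _
    rw [hprodu, hprodv] at hkey
    have := mul_le_mul_of_nonneg_left hkey (le_of_lt hPpos)
    rw [mul_one] at this
    calc wt * ∏ a ∈ F, u a + wf * ∏ a ∈ F, v a
        = (∏ a ∈ F, n a) * (wt * ((∏ a ∈ F, u a) / ∏ a ∈ F, n a)
            + wf * ((∏ a ∈ F, v a) / ∏ a ∈ F, n a)) := by
          field_simp
      _ ≤ ∏ a ∈ F, n a := this


end AMGM

section Finner

variable {ι : Type*} [Fintype ι] [DecidableEq ι]



/-- **Finner's inequality** on the finite product space. -/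
theorem finner {κ : Type*} [DecidableEq κ] (w : ι → Bool → ℝ)
    (hw0 : ∀ i b, 0 ≤ w i b) (hw1 : ∀ i, w i true + w i false = 1)
    (k : ℕ) (hk : 0 < k) (T : Finset ι) (A : Finset κ)
    (S : κ → Finset ι) (g : κ → (ι → Bool) → ℝ)
    (hg0 : ∀ a ∈ A, ∀ ω, 0 ≤ g a ω)
    (hsupp : ∀ a ∈ A, ∀ ω ω', (∀ i ∈ S a, ω i = ω' i) → g a ω = g a ω')
    (hTS : ∀ a ∈ A, S a ⊆ T)
    (hmult : ∀ i, (A.filter (fun a => i ∈ S a)).card ≤ k) :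
    Ex w (fun ω => ∏ a ∈ A, g a ω) ≤
      ∏ a ∈ A, (Ex w (fun ω => g a ω ^ k)) ^ ((1:ℝ) / k) := by
  have hkR : (0:ℝ) < k := by exact_mod_cast hk
  induction T using Finset.strongInduction generalizing S g with
  | _ T ih =>
  rcases T.eq_empty_or_nonempty with rfl | ⟨e, he⟩
  · -- base case : all functions are constant
    set ω₀ : ι → Bool := fun _ => true with hω₀
    have hconst : ∀ a ∈ A, ∀ ω, g a ω = g a ω₀ := fun a ha ω =>
      hsupp a ha ω ω₀ (fun i hi => absurd (hTS a ha hi) (Finset.notMem_empty i))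
    have hL : Ex w (fun ω => ∏ a ∈ A, g a ω) = ∏ a ∈ A, g a ω₀ := by
      rw [Ex_congr (g := fun _ => ∏ a ∈ A, g a ω₀)
        (fun ω => Finset.prod_congr rfl fun a ha => hconst a ha ω), Ex_const hw1]
    have hR : ∀ a ∈ A, Ex w (fun ω => g a ω ^ k) = g a ω₀ ^ k := fun a ha => by
      rw [Ex_congr (g := fun _ => g a ω₀ ^ k) (fun ω => by rw [hconst a ha ω]),
        Ex_const hw1]
    rw [hL]
    refine le_of_eq (Finset.prod_congr rfl fun a ha => ?_)
    rw [hR a ha, ← Real.rpow_natCast (g a ω₀) k, ← Real.rpow_mul (hg0 a ha ω₀),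
      mul_one_div, div_self (ne_of_gt hkR), Real.rpow_one]
  · -- inductive step : average out the coordinate e
    set g' : κ → (ι → Bool) → ℝ := fun a ω =>
      if e ∈ S a then
        (w e true * g a (Function.update ω e true) ^ k +
         w e false * g a (Function.update ω e false) ^ k) ^ ((1:ℝ)/k)
      else g a ω with hg'
    set S' : κ → Finset ι := fun a => (S a).erase e with hS'
    have hbase : ∀ a ∈ A, ∀ ω, 0 ≤
        w e true * g a (Function.update ω e true) ^ k +
        w e false * g a (Function.update ω e false) ^ k := fun a ha ω =>
      add_nonneg (mul_nonneg (hw0 e true) (pow_nonneg (hg0 a ha _) k))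
        (mul_nonneg (hw0 e false) (pow_nonneg (hg0 a ha _) k))
    have hg'0 : ∀ a ∈ A, ∀ ω, 0 ≤ g' a ω := by
      intro a ha ω
      rw [hg']
      dsimp only
      split_ifs with h
      · exact Real.rpow_nonneg (hbase a ha ω) _
      · exact hg0 a ha ω
    have hsupp' : ∀ a ∈ A, ∀ ω ω', (∀ i ∈ S' a, ω i = ω' i) → g' a ω = g' a ω' := by
      intro a ha ω ω' hagree
      rw [hg']
      dsimp only
      by_cases h : e ∈ S a
      · rw [if_pos h, if_pos h]
        have hupd : ∀ b : Bool,
            g a (Function.update ω e b) = g a (Function.update ω' e b) := by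
          intro b
          refine hsupp a ha _ _ (fun i hi => ?_)
          by_cases hie : i = e
          · subst hie; simp
          · rw [Function.update_of_ne hie, Function.update_of_ne hie]
            exact hagree i (Finset.mem_erase.mpr ⟨hie, hi⟩)
        rw [hupd true, hupd false]
      · rw [if_neg h, if_neg h]
        refine hsupp a ha _ _ (fun i hi => ?_)
        refine hagree i (Finset.mem_erase.mpr ⟨?_, hi⟩)
        rintro rfl; exact h hi
    have hTS' : ∀ a ∈ A, S' a ⊆ T.erase e := by
      intro a ha i hi
      rw [Finset.mem_erase] at hi ⊢
      exact ⟨hi.1, hTS a ha hi.2⟩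
    have hmult' : ∀ i, (A.filter (fun a => i ∈ S' a)).card ≤ k := by
      intro i
      refine le_trans (Finset.card_le_card ?_) (hmult i)
      intro a ha
      rw [Finset.mem_filter] at ha ⊢
      exact ⟨ha.1, Finset.mem_of_mem_erase ha.2⟩
    -- Step A : Ex (∏ g) ≤ Ex (∏ g')
    have stepA : Ex w (fun ω => ∏ a ∈ A, g a ω) ≤ Ex w (fun ω => ∏ a ∈ A, g' a ω) := by
      rw [Ex_avg hw1 e (fun ω => ∏ a ∈ A, g a ω)]
      refine Ex_mono hw0 (fun ω => ?_)
      have hsplit : ∀ b : Bool, ∏ a ∈ A, g a (Function.update ω e b) =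
          (∏ a ∈ A.filter (fun a => e ∈ S a), g a (Function.update ω e b)) *
          ∏ a ∈ A.filter (fun a => ¬ e ∈ S a), g a ω := by
        intro b
        rw [← Finset.prod_filter_mul_prod_filter_not A (fun a => e ∈ S a)]
        congr 1
        refine Finset.prod_congr rfl fun a ha => ?_
        rw [Finset.mem_filter] at ha
        refine hsupp a ha.1 _ _ (fun i hi => ?_)
        rw [Function.update_of_ne]
        rintro rfl; exact ha.2 hi
      have hsplit' : ∏ a ∈ A, g' a ω =
          (∏ a ∈ A.filter (fun a => e ∈ S a), g' a ω) *
          ∏ a ∈ A.filter (fun a => ¬ e ∈ S a), g a ω := by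
        rw [← Finset.prod_filter_mul_prod_filter_not A (fun a => e ∈ S a)]
        congr 1
        refine Finset.prod_congr rfl fun a ha => ?_
        rw [Finset.mem_filter] at ha
        rw [hg']
        dsimp only
        rw [if_neg ha.2]
      have hC : 0 ≤ ∏ a ∈ A.filter (fun a => ¬ e ∈ S a), g a ω :=
        Finset.prod_nonneg fun a ha => hg0 a (Finset.mem_of_mem_filter a ha) ω
      rw [hsplit true, hsplit false, hsplit']
      have hhold := holder_two_point k hk (A.filter (fun a => e ∈ S a)) (hmult e)
        (w e true) (w e false) (hw0 e true) (hw0 e false) (hw1 e)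
        (fun a => g a (Function.update ω e true))
        (fun a => g a (Function.update ω e false))
        (fun a ha => hg0 a (Finset.mem_of_mem_filter a ha) _)
        (fun a ha => hg0 a (Finset.mem_of_mem_filter a ha) _)
      have hprod_eq : ∏ a ∈ A.filter (fun a => e ∈ S a),
          (w e true * g a (Function.update ω e true) ^ k +
           w e false * g a (Function.update ω e false) ^ k) ^ ((1:ℝ)/k) =
          ∏ a ∈ A.filter (fun a => e ∈ S a), g' a ω := by
        refine Finset.prod_congr rfl fun a ha => ?_
        rw [Finset.mem_filter] at ha
        rw [hg']
        dsimp only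
        rw [if_pos ha.2]
      rw [hprod_eq] at hhold
      calc w e true * ((∏ a ∈ A.filter (fun a => e ∈ S a), g a (Function.update ω e true)) *
              ∏ a ∈ A.filter (fun a => ¬ e ∈ S a), g a ω) +
           w e false * ((∏ a ∈ A.filter (fun a => e ∈ S a), g a (Function.update ω e false)) *
              ∏ a ∈ A.filter (fun a => ¬ e ∈ S a), g a ω)
          = (w e true * ∏ a ∈ A.filter (fun a => e ∈ S a), g a (Function.update ω e true) +
             w e false * ∏ a ∈ A.filter (fun a => e ∈ S a), g a (Function.update ω e false)) *
            ∏ a ∈ A.filter (fun a => ¬ e ∈ S a), g a ω := by ring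
        _ ≤ (∏ a ∈ A.filter (fun a => e ∈ S a), g' a ω) *
            ∏ a ∈ A.filter (fun a => ¬ e ∈ S a), g a ω :=
            mul_le_mul_of_nonneg_right hhold hC
    -- Step B : Ex ((g' a) ^ k) = Ex ((g a) ^ k)
    have stepB : ∀ a ∈ A, Ex w (fun ω => g' a ω ^ k) = Ex w (fun ω => g a ω ^ k) := by
      intro a ha
      by_cases h : e ∈ S a
      · have hpt : ∀ ω, g' a ω ^ k =
            w e true * g a (Function.update ω e true) ^ k +
            w e false * g a (Function.update ω e false) ^ k := by
          intro ω
          rw [hg']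
          dsimp only
          rw [if_pos h, ← Real.rpow_natCast (_ ^ ((1:ℝ)/k)) k,
            ← Real.rpow_mul (hbase a ha ω), one_div, inv_mul_cancel₀ (ne_of_gt hkR),
            Real.rpow_one]
        rw [Ex_congr hpt, ← Ex_avg hw1 e (fun ω => g a ω ^ k)]
      · refine Ex_congr (fun ω => ?_)
        rw [hg']
        dsimp only
        rw [if_neg h]
    calc Ex w (fun ω => ∏ a ∈ A, g a ω)
        ≤ Ex w (fun ω => ∏ a ∈ A, g' a ω) := stepA
      _ ≤ ∏ a ∈ A, (Ex w (fun ω => g' a ω ^ k)) ^ ((1:ℝ)/k) :=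
          ih (T.erase e) (Finset.erase_ssubset he) S' g'
            hg'0 hsupp' hTS' hmult'
      _ = ∏ a ∈ A, (Ex w (fun ω => g a ω ^ k)) ^ ((1:ℝ)/k) :=
          Finset.prod_congr rfl fun a ha => by rw [stepB a ha]


end Finner

/-- Hoeffding's lemma for a Bernoulli(θ) variable: mgf bound. -/
lemma bern_mgf_bound {θ : ℝ} (h0 : 0 ≤ θ) (h1 : θ ≤ 1) (u : ℝ) :
    1 + θ * (Real.exp u - 1) ≤ Real.exp (θ * u + u ^ 2 / 8) := by
  set D : ℝ → ℝ := fun t => 1 + θ * (Real.exp t - 1) with hD_def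
  have hD : ∀ t, 0 < D t := by
    intro t
    have he := Real.exp_pos t
    rcases eq_or_lt_of_le h0 with h | h
    · simp [hD_def, ← h]
    · have : 0 < θ * Real.exp t := mul_pos h he
      simp only [hD_def]
      nlinarith
  set ψ : ℝ → ℝ := fun t => θ + t / 4 - θ * Real.exp t / D t with hψ_def
  set φ : ℝ → ℝ := fun t => θ * t + t ^ 2 / 8 - Real.log (D t) with hφ_def
  have hasDerivD : ∀ t, HasDerivAt D (θ * Real.exp t) t := by
    intro t
    simpa [hD_def] using (((Real.hasDerivAt_exp t).sub_const 1).const_mul θ).const_add 1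
  have hasDerivφ : ∀ t, HasDerivAt φ (ψ t) t := by
    intro t
    have h1' : HasDerivAt (fun t : ℝ => θ * t) θ t := by
      simpa using (hasDerivAt_id t).const_mul θ
    have h2' : HasDerivAt (fun t : ℝ => t ^ 2 / 8) (t / 4) t := by
      have := (hasDerivAt_pow 2 t).div_const 8
      refine this.congr_deriv ?_
      norm_num
      ring
    have h3' : HasDerivAt (fun t => Real.log (D t)) (θ * Real.exp t / D t) t :=
      (hasDerivD t).log (ne_of_gt (hD t))
    exact (h1'.add h2').sub h3'
  have hasDerivψ : ∀ t, HasDerivAt ψ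
      (1 / 4 - (θ * Real.exp t * D t - θ * Real.exp t * (θ * Real.exp t)) / (D t) ^ 2)
      t := by
    intro t
    have hE : HasDerivAt (fun t => θ * Real.exp t) (θ * Real.exp t) t :=
      (Real.hasDerivAt_exp t).const_mul θ
    have hdiv := hE.div (hasDerivD t) (ne_of_gt (hD t))
    have hc : HasDerivAt (fun t : ℝ => θ + t / 4) (1 / 4) t := by
      simpa using ((hasDerivAt_id t).div_const 4).const_add θ
    exact hc.sub hdiv
  have hψderiv_nonneg : ∀ t, 0 ≤ 1 / 4 -
      (θ * Real.exp t * D t - θ * Real.exp t * (θ * Real.exp t)) / (D t) ^ 2 := by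
    intro t
    have hDt := hD t
    have hDeq : D t = (1 - θ) + θ * Real.exp t := by simp [hD_def]; ring
    set b := θ * Real.exp t with hb
    have hbnn : 0 ≤ b := mul_nonneg h0 (Real.exp_pos t).le
    have hann : 0 ≤ 1 - θ := by linarith
    have key : b * D t - b * b ≤ (D t) ^ 2 / 4 := by
      have : b * (D t - b) = (1 - θ) * b := by rw [hDeq]; ring
      nlinarith [sq_nonneg ((1 - θ) - b), sq_nonneg (D t)]
    have hsq : (0:ℝ) < (D t) ^ 2 := by positivity
    rw [sub_nonneg, div_le_iff₀ hsq]
    nlinarith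
  have hψmono : Monotone ψ := by
    refine monotone_of_deriv_nonneg (fun t => (hasDerivψ t).differentiableAt) ?_
    intro t
    rw [(hasDerivψ t).deriv]
    exact hψderiv_nonneg t
  have hψ0 : ψ 0 = 0 := by
    simp [hψ_def, hD_def]
  have hφ0 : φ 0 = 0 := by
    simp [hφ_def, hD_def]
  have hφnonneg : ∀ t, 0 ≤ φ t := by
    intro t
    rcases le_total 0 t with ht | ht
    · have hmono : MonotoneOn φ (Set.Ici 0) := by
        refine monotoneOn_of_deriv_nonneg (convex_Ici 0)
          (Continuous.continuousOn (continuous_iff_continuousAt.mpr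
            (fun x => (hasDerivφ x).differentiableAt.continuousAt)))
          (fun x _ => (hasDerivφ x).differentiableAt.differentiableWithinAt) ?_
        intro x hx
        rw [interior_Ici] at hx
        rw [(hasDerivφ x).deriv]
        calc (0:ℝ) = ψ 0 := hψ0.symm
          _ ≤ ψ x := hψmono (le_of_lt hx)
      have := hmono (Set.mem_Ici.mpr le_rfl) (Set.mem_Ici.mpr ht) ht
      rwa [hφ0] at this
    · have hanti : AntitoneOn φ (Set.Iic 0) := by
        refine antitoneOn_of_deriv_nonpos (convex_Iic 0)
          (Continuous.continuousOn (continuous_iff_continuousAt.mpr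
            (fun x => (hasDerivφ x).differentiableAt.continuousAt)))
          (fun x _ => (hasDerivφ x).differentiableAt.differentiableWithinAt) ?_
        intro x hx
        rw [interior_Iic] at hx
        rw [(hasDerivφ x).deriv]
        calc ψ x ≤ ψ 0 := hψmono (le_of_lt hx)
          _ = 0 := hψ0
      have := hanti (Set.mem_Iic.mpr ht) (Set.mem_Iic.mpr le_rfl) ht
      rwa [hφ0] at this
  have hlog : Real.log (D u) ≤ θ * u + u ^ 2 / 8 := by
    have := hφnonneg u
    simp only [hφ_def] at this
    linarith
  calc 1 + θ * (Real.exp u - 1) = D u := rfl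
    _ = Real.exp (Real.log (D u)) := (Real.exp_log (hD u)).symm
    _ ≤ Real.exp (θ * u + u ^ 2 / 8) := Real.exp_le_exp.mpr hlog


end FPS



open Finset

namespace FourProfileSparsifier

variable {V : Type*} [Fintype V] [DecidableEq V]

/-- The random subgraph of `G` keeping exactly those edges `e` with `ω e = true`. -/
def keep (G : SimpleGraph V) [DecidableRel G.Adj] (ω : G.edgeFinset → Bool) :
    SimpleGraph V where
  Adj a b := ∃ h : G.Adj a b, ω ⟨s(a, b), SimpleGraph.mem_edgeFinset.mpr h⟩ = true
  symm := by
    constructor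
    rintro a b ⟨h, hw⟩
    refine ⟨h.symm, ?_⟩
    have key : (⟨s(b, a), SimpleGraph.mem_edgeFinset.mpr h.symm⟩ : G.edgeFinset) =
        ⟨s(a, b), SimpleGraph.mem_edgeFinset.mpr h⟩ := Subtype.ext (Sym2.eq_swap)
    rw [key, hw]
  loopless := by constructor; rintro a ⟨h, -⟩; exact G.irrefl h

instance (G : SimpleGraph V) [DecidableRel G.Adj] (ω : G.edgeFinset → Bool) :
    DecidableRel (keep G ω).Adj := fun _ _ => exists_prop_decidable _

/-- `N10`: the number of 4-cliques of `G`. -/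
def N10 (G : SimpleGraph V) [DecidableRel G.Adj] : ℕ := (G.cliqueFinset 4).card

/-- `k10`: the maximum number of 4-cliques of `G` sharing a common edge. -/
def k10 (G : SimpleGraph V) [DecidableRel G.Adj] : ℕ :=
  Finset.univ.sup fun x : V × V =>
    if G.Adj x.1 x.2 then
      ((G.cliqueFinset 4).filter fun s => x.1 ∈ s ∧ x.2 ∈ s).card
    else 0

/-- `Y10 ω`: the number of 4-cliques of the sparsified graph. -/
def Y10 (G : SimpleGraph V) [DecidableRel G.Adj] (ω : G.edgeFinset → Bool) : ℕ :=
  ((keep G ω).cliqueFinset 4).card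

open Classical in
/-- The probability of the event `A` under independent Bernoulli(`p`) retention of each
edge of `G`: the sample space is the set of functions `ω : E → Bool` equipped with the
product of Bernoulli(`p`) measures. -/
noncomputable def prob (G : SimpleGraph V) [DecidableRel G.Adj] (p : ℝ)
    (A : (G.edgeFinset → Bool) → Prop) : ℝ :=
  ∑ ω : G.edgeFinset → Bool,
    if A ω then ∏ e : G.edgeFinset, (if ω e then p else 1 - p) else 0


section Graph

variable (G : SimpleGraph V) [DecidableRel G.Adj]

/-- The coordinates (edges) spanned by a clique `Q`. -/
def Scoords (Q : Finset V) : Finset (G.edgeFinset) :=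
  Finset.univ.filter (fun e => (e : Sym2 V) ∈ Q.sym2)

/-- The indicator that all edges of `Q` are retained. -/
def Xind (Q : Finset V) (ω : G.edgeFinset → Bool) : ℝ :=
  ∏ e ∈ Scoords G Q, (if ω e = true then (1:ℝ) else 0)

lemma mem_Scoords_iff {Q : Finset V} {e : G.edgeFinset} :
    e ∈ Scoords G Q ↔ ∀ v ∈ (e : Sym2 V), v ∈ Q := by
  rw [Scoords, Finset.mem_filter, Finset.mem_sym2_iff]
  simp

lemma Xind_eq_ite (Q : Finset V) (ω : G.edgeFinset → Bool) :
    Xind G Q ω = if (∀ e ∈ Scoords G Q, ω e = true) then (1:ℝ) else 0 := by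
  unfold Xind
  rw [Finset.prod_boole]
  split_ifs with h1
  · rfl
  · rfl

lemma Xind_nonneg (Q : Finset V) (ω : G.edgeFinset → Bool) : 0 ≤ Xind G Q ω := by
  rw [Xind_eq_ite]; split_ifs <;> norm_num

lemma Xind_zero_or_one (Q : Finset V) (ω : G.edgeFinset → Bool) :
    Xind G Q ω = 0 ∨ Xind G Q ω = 1 := by
  rw [Xind_eq_ite]; split_ifs <;> simp

lemma Xind_supp (Q : Finset V) (ω ω' : G.edgeFinset → Bool)
    (h : ∀ e ∈ Scoords G Q, ω e = ω' e) : Xind G Q ω = Xind G Q ω' :=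
  Finset.prod_congr rfl fun e he => by rw [h e he]

lemma keep_le (ω : G.edgeFinset → Bool) : keep G ω ≤ G := by
  rintro a b ⟨h, -⟩; exact h

/-- Membership characterization of 4-cliques of the sparsified graph. -/
lemma mem_keep_clique_iff {Q : Finset V} (hQ : Q ∈ G.cliqueFinset 4)
    (ω : G.edgeFinset → Bool) :
    Q ∈ (keep G ω).cliqueFinset 4 ↔ ∀ e ∈ Scoords G Q, ω e = true := by
  rw [SimpleGraph.mem_cliqueFinset_iff] at hQ ⊢
  constructor
  · intro h e he
    rcases e with ⟨z, hz⟩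
    induction z using Sym2.inductionOn with
    | hf a b =>
      have hmem := mem_Scoords_iff G |>.mp he
      have haQ : a ∈ Q := hmem a (by simp)
      have hbQ : b ∈ Q := hmem b (by simp)
      have hadj : G.Adj a b := by
        have := SimpleGraph.mem_edgeFinset.mp hz
        rwa [SimpleGraph.mem_edgeSet] at this
      have hne : a ≠ b := hadj.ne
      have hkadj : (keep G ω).Adj a b := h.isClique haQ hbQ hne
      obtain ⟨h', hω⟩ := hkadj
      have : (⟨s(a, b), SimpleGraph.mem_edgeFinset.mpr h'⟩ : G.edgeFinset) =
          ⟨s(a, b), hz⟩ := Subtype.ext rfl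
      rwa [this] at hω
  · intro h
    refine ⟨?_, hQ.card_eq⟩
    intro a haQ b hbQ hne
    have hadj : G.Adj a b := hQ.isClique haQ hbQ hne
    have hmem : (⟨s(a, b), SimpleGraph.mem_edgeFinset.mpr hadj⟩ : G.edgeFinset) ∈
        Scoords G Q := by
      rw [mem_Scoords_iff]
      intro v hv
      rcases Sym2.mem_iff.mp hv with rfl | rfl <;> assumption
    exact ⟨hadj, h _ hmem⟩

lemma Xind_eq_keep_ind {Q : Finset V} (hQ : Q ∈ G.cliqueFinset 4)
    (ω : G.edgeFinset → Bool) :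
    Xind G Q ω = if Q ∈ (keep G ω).cliqueFinset 4 then (1:ℝ) else 0 := by
  rw [Xind_eq_ite]
  congr 1
  rw [eq_iff_iff, ← mem_keep_clique_iff G hQ]

/-- `Y10` as a sum of clique indicators. -/
lemma Y10_eq_sum (ω : G.edgeFinset → Bool) :
    (Y10 G ω : ℝ) = ∑ Q ∈ G.cliqueFinset 4, Xind G Q ω := by
  have hsub : (keep G ω).cliqueFinset 4 ⊆ G.cliqueFinset 4 := by
    intro Q hQ
    rw [SimpleGraph.mem_cliqueFinset_iff] at *
    exact hQ.mono (keep_le G ω)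
  have hfilter : (G.cliqueFinset 4).filter (fun Q => Q ∈ (keep G ω).cliqueFinset 4) =
      (keep G ω).cliqueFinset 4 := by
    ext Q
    simp only [Finset.mem_filter]
    exact ⟨fun h => h.2, fun h => ⟨hsub h, h⟩⟩
  rw [Finset.sum_congr rfl (fun Q hQ => Xind_eq_keep_ind G hQ ω), Finset.sum_boole,
    hfilter, Y10]

/-- A 4-clique spans exactly 6 edges. -/
lemma card_Scoords {Q : Finset V} (hQ : Q ∈ G.cliqueFinset 4) :
    (Scoords G Q).card = 6 := by
  rw [SimpleGraph.mem_cliqueFinset_iff] at hQ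
  have hcard : Q.card = 4 := hQ.card_eq
  have key : (Scoords G Q).card = (Q.sym2.filter (fun z => ¬ z.IsDiag)).card := by
    refine Finset.card_bij (fun e _ => (e : Sym2 V)) ?_ ?_ ?_
    · intro e he
      rw [Finset.mem_filter]
      refine ⟨(Finset.mem_filter.mp he).2, ?_⟩
      exact G.not_isDiag_of_mem_edgeSet (SimpleGraph.mem_edgeFinset.mp e.2)
    · intro e₁ _ e₂ _ h
      exact Subtype.ext h
    · intro z hz
      rw [Finset.mem_filter] at hz
      obtain ⟨hz1, hz2⟩ := hz
      induction z using Sym2.inductionOn with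
      | hf a b =>
        have hne : a ≠ b := fun h => hz2 (by rw [h]; exact Sym2.mk_isDiag_iff.mpr rfl)
        have haQ : a ∈ Q := Finset.mem_sym2_iff.mp hz1 a (by simp)
        have hbQ : b ∈ Q := Finset.mem_sym2_iff.mp hz1 b (by simp)
        have hadj : G.Adj a b := hQ.isClique haQ hbQ hne
        refine ⟨⟨s(a,b), SimpleGraph.mem_edgeFinset.mpr hadj⟩, ?_, rfl⟩
        rw [Scoords, Finset.mem_filter]
        exact ⟨Finset.mem_univ _, hz1⟩
  rw [key]
  have h1 : (Q.sym2.filter (fun z => z.IsDiag)).card +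
      (Q.sym2.filter (fun z => ¬ z.IsDiag)).card = Q.sym2.card :=
    Finset.card_filter_add_card_filter_not _
  have h2 : Q.sym2.card = 10 := by
    rw [Finset.card_sym2, hcard]
    decide
  have h3 : Q.sym2.filter (fun z => z.IsDiag) = Q.image Sym2.diag := by
    ext z
    rw [Finset.mem_filter, Finset.mem_image]
    constructor
    · rintro ⟨hz1, hz2⟩
      induction z using Sym2.inductionOn with
      | hf a b =>
        have hab : a = b := Sym2.mk_isDiag_iff.mp hz2
        exact ⟨a, Finset.mem_sym2_iff.mp hz1 a (by simp), by rw [hab]; rfl⟩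
    · rintro ⟨a, haQ, rfl⟩
      exact ⟨Finset.mem_sym2_iff.mpr (fun v hv => by
        rwa [Sym2.mem_iff.mp hv |>.elim (fun h => h) (fun h => h)]), Sym2.diag_isDiag a⟩
  have h4 : (Q.image Sym2.diag).card = 4 := by
    rw [Finset.card_image_of_injective _ Sym2.diag_injective, hcard]
  rw [h3] at h1
  omega

/-- Multiplicity bound: each edge lies in at most `k10 G` cliques. -/
lemma mult_le_k10 (e : G.edgeFinset) :
    ((G.cliqueFinset 4).filter (fun Q => e ∈ Scoords G Q)).card ≤ k10 G := by
  rcases e with ⟨z, hz⟩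
  induction z using Sym2.inductionOn with
  | hf a b =>
    have hadj : G.Adj a b := by
      have := SimpleGraph.mem_edgeFinset.mp hz
      rwa [SimpleGraph.mem_edgeSet] at this
    have hfeq : (G.cliqueFinset 4).filter
        (fun Q => (⟨s(a,b), hz⟩ : G.edgeFinset) ∈ Scoords G Q) =
        (G.cliqueFinset 4).filter (fun Q => a ∈ Q ∧ b ∈ Q) := by
      refine Finset.filter_congr (fun Q _ => ?_)
      rw [mem_Scoords_iff]
      constructor
      · intro h
        exact ⟨h a (by simp), h b (by simp)⟩
      · rintro ⟨ha, hb⟩ v hv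
        rcases Sym2.mem_iff.mp hv with rfl | rfl <;> assumption
    rw [hfeq]
    calc ((G.cliqueFinset 4).filter (fun Q => a ∈ Q ∧ b ∈ Q)).card
        = (if G.Adj a b then
            ((G.cliqueFinset 4).filter fun s => a ∈ s ∧ b ∈ s).card else 0) :=
          (if_pos hadj).symm
      _ ≤ k10 G := Finset.le_sup (f := fun x : V × V =>
          if G.Adj x.1 x.2 then
            ((G.cliqueFinset 4).filter fun s => x.1 ∈ s ∧ x.2 ∈ s).card
          else 0) (Finset.mem_univ (a, b))

lemma one_le_k10 (hN : 1 ≤ N10 G) : 1 ≤ k10 G := by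
  obtain ⟨Q, hQ⟩ := Finset.card_pos.mp hN
  have hQ' := SimpleGraph.mem_cliqueFinset_iff.mp hQ
  obtain ⟨a, haQ, b, hbQ, hne⟩ := Finset.one_lt_card.mp (by rw [hQ'.card_eq]; norm_num)
  have hadj : G.Adj a b := hQ'.isClique haQ hbQ hne
  have hmem : Q ∈ (G.cliqueFinset 4).filter (fun s => a ∈ s ∧ b ∈ s) :=
    Finset.mem_filter.mpr ⟨hQ, haQ, hbQ⟩
  calc 1 ≤ ((G.cliqueFinset 4).filter (fun s => a ∈ s ∧ b ∈ s)).card :=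
        Finset.card_pos.mpr ⟨Q, hmem⟩
    _ = (if G.Adj a b then
          ((G.cliqueFinset 4).filter fun s => a ∈ s ∧ b ∈ s).card else 0) :=
        (if_pos hadj).symm
    _ ≤ k10 G := Finset.le_sup (f := fun x : V × V =>
        if G.Adj x.1 x.2 then
          ((G.cliqueFinset 4).filter fun s => x.1 ∈ s ∧ x.2 ∈ s).card
        else 0) (Finset.mem_univ (a, b))

/-- Expected value of a clique indicator is `p ^ 6`. -/
lemma Ex_Xind {p : ℝ} {Q : Finset V} (hQ : Q ∈ G.cliqueFinset 4) :
    FPS.Ex (fun (_ : G.edgeFinset) b => if b then p else 1 - p) (Xind G Q) = p ^ 6 := by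
  refine Eq.trans (FPS.Ex_prod (w := fun (_ : G.edgeFinset) b => if b then p else 1 - p)
    (fun _ => by norm_num) (Scoords G Q)
    (fun _ b => if b = true then (1:ℝ) else 0)) ?_
  calc ∏ e ∈ Scoords G Q,
        ((if (true : Bool) then p else 1 - p) * (if (true : Bool) = true then (1:ℝ) else 0) +
         (if (false : Bool) then p else 1 - p) * (if (false : Bool) = true then (1:ℝ) else 0))
      = ∏ _e ∈ Scoords G Q, p := Finset.prod_congr rfl (fun _ _ => by norm_num)
    _ = p ^ 6 := by rw [Finset.prod_const, card_Scoords G hQ]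

end Graph

section Assembly

variable (G : SimpleGraph V) [DecidableRel G.Adj]

/-- The moment generating function bound for `Y10`, via Finner's inequality. -/
lemma mgf_bound (p : ℝ) (hp0 : 0 ≤ p) (hp1 : p ≤ 1) (hN : 1 ≤ N10 G) (lam : ℝ) :
    FPS.Ex (fun (_ : G.edgeFinset) b => if b then p else 1 - p)
      (fun ω => Real.exp (lam * (Y10 G ω : ℝ))) ≤
    Real.exp (lam * p ^ 6 * (N10 G : ℝ) +
      (k10 G : ℝ) * lam ^ 2 / 8 * (N10 G : ℝ)) := by
  set w : G.edgeFinset → Bool → ℝ := fun _ b => if b then p else 1 - p with hw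
  have hw0 : ∀ i b, 0 ≤ w i b := by
    intro i b
    cases b <;> simp [hw] <;> linarith
  have hw1 : ∀ i, w i true + w i false = 1 := by intro i; simp [hw]
  have hθ0 : (0:ℝ) ≤ p ^ 6 := by positivity
  have hθ1 : p ^ 6 ≤ 1 := pow_le_one₀ hp0 hp1
  have hkk : 0 < k10 G := one_le_k10 G hN
  have hkkR : (0:ℝ) < (k10 G : ℝ) := by exact_mod_cast hkk
  -- rewrite exp of sum as product
  have step1 : FPS.Ex w (fun ω => Real.exp (lam * (Y10 G ω : ℝ))) =
      FPS.Ex w (fun ω => ∏ Q ∈ G.cliqueFinset 4, Real.exp (lam * Xind G Q ω)) := by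
    refine FPS.Ex_congr (fun ω => ?_)
    rw [Y10_eq_sum G ω, Finset.mul_sum, Real.exp_sum]
  -- Finner
  have step2 := FPS.finner w hw0 hw1 (k10 G) hkk Finset.univ (G.cliqueFinset 4)
    (Scoords G) (fun Q ω => Real.exp (lam * Xind G Q ω))
    (fun Q _ ω => (Real.exp_pos _).le)
    (fun Q _ ω ω' h => by exact congrArg (fun x => Real.exp (lam * x)) (Xind_supp G Q ω ω' h))
    (fun Q _ => Finset.subset_univ _)
    (fun e => mult_le_k10 G e)
  -- compute each factor
  have step3 : ∀ Q ∈ G.cliqueFinset 4,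
      FPS.Ex w (fun ω => Real.exp (lam * Xind G Q ω) ^ (k10 G)) ≤
      Real.exp (p ^ 6 * ((k10 G : ℝ) * lam) + ((k10 G : ℝ) * lam) ^ 2 / 8) := by
    intro Q hQ
    set u := (k10 G : ℝ) * lam with hu
    have hpt : ∀ ω, Real.exp (lam * Xind G Q ω) ^ (k10 G) =
        1 + (Real.exp u - 1) * Xind G Q ω := by
      intro ω
      rw [← Real.exp_nat_mul]
      rcases Xind_zero_or_one G Q ω with h | h <;> rw [h] <;> simp [hu]
    calc FPS.Ex w (fun ω => Real.exp (lam * Xind G Q ω) ^ (k10 G))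
        = FPS.Ex w (fun ω => 1 + (Real.exp u - 1) * Xind G Q ω) := FPS.Ex_congr hpt
      _ = 1 + (Real.exp u - 1) * p ^ 6 := by
          rw [FPS.Ex_add, FPS.Ex_smul, FPS.Ex_const hw1, Ex_Xind G hQ]
      _ = 1 + p ^ 6 * (Real.exp u - 1) := by ring
      _ ≤ Real.exp (p ^ 6 * u + u ^ 2 / 8) := FPS.bern_mgf_bound hθ0 hθ1 u
  -- put it together
  have hExp_nonneg : ∀ Q ∈ G.cliqueFinset 4, 0 ≤
      FPS.Ex w (fun ω => Real.exp (lam * Xind G Q ω) ^ (k10 G)) :=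
    fun Q _ => FPS.Ex_nonneg hw0 (fun ω => pow_nonneg (Real.exp_pos _).le _)
  have step4 : ∏ Q ∈ G.cliqueFinset 4,
      (FPS.Ex w (fun ω => Real.exp (lam * Xind G Q ω) ^ (k10 G))) ^ ((1:ℝ) / (k10 G)) ≤
      Real.exp (lam * p ^ 6 * (N10 G : ℝ) +
        (k10 G : ℝ) * lam ^ 2 / 8 * (N10 G : ℝ)) := by
    have hfac : ∀ Q ∈ G.cliqueFinset 4,
        (FPS.Ex w (fun ω => Real.exp (lam * Xind G Q ω) ^ (k10 G))) ^ ((1:ℝ) / (k10 G)) ≤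
        Real.exp ((p ^ 6 * ((k10 G : ℝ) * lam) + ((k10 G : ℝ) * lam) ^ 2 / 8) *
          ((1:ℝ) / (k10 G))) := by
      intro Q hQ
      have hkey : Real.exp ((p ^ 6 * ((k10 G : ℝ) * lam) + ((k10 G : ℝ) * lam) ^ 2 / 8) *
          ((1:ℝ) / (k10 G))) =
          (Real.exp (p ^ 6 * ((k10 G : ℝ) * lam) + ((k10 G : ℝ) * lam) ^ 2 / 8)) ^
            ((1:ℝ) / (k10 G)) := by
        rw [Real.rpow_def_of_pos (Real.exp_pos _), Real.log_exp]
      rw [hkey]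
      exact Real.rpow_le_rpow (hExp_nonneg Q hQ) (step3 Q hQ) (by positivity)
    calc ∏ Q ∈ G.cliqueFinset 4,
          (FPS.Ex w (fun ω => Real.exp (lam * Xind G Q ω) ^ (k10 G))) ^ ((1:ℝ) / (k10 G))
        ≤ ∏ _Q ∈ G.cliqueFinset 4,
          Real.exp ((p ^ 6 * ((k10 G : ℝ) * lam) + ((k10 G : ℝ) * lam) ^ 2 / 8) *
            ((1:ℝ) / (k10 G))) := by
          refine Finset.prod_le_prod (fun Q hQ => Real.rpow_nonneg (hExp_nonneg Q hQ) _)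
            hfac
      _ = Real.exp ((p ^ 6 * ((k10 G : ℝ) * lam) + ((k10 G : ℝ) * lam) ^ 2 / 8) *
            ((1:ℝ) / (k10 G)) * (N10 G : ℝ)) := by
          rw [Finset.prod_const, ← Real.exp_nat_mul, N10]
          ring_nf
      _ = Real.exp (lam * p ^ 6 * (N10 G : ℝ) +
            (k10 G : ℝ) * lam ^ 2 / 8 * (N10 G : ℝ)) := by
          congr 1
          field_simp
  rw [step1]
  exact le_trans step2 step4

open scoped Classical in
lemma prob_eq_Ex (p : ℝ) (B : (G.edgeFinset → Bool) → Prop) :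
    prob G p B = FPS.Ex (fun (_ : G.edgeFinset) b => if b then p else 1 - p)
      (fun ω => if B ω then (1:ℝ) else 0) := by
  unfold prob FPS.Ex
  refine Finset.sum_congr rfl fun ω _ => ?_
  by_cases h : B ω
  · simp [h]
  · simp [h]

/-- One-sided Chernoff tail bound. -/
lemma tail_bound (p ε : ℝ) (hp0 : 0 < p) (hp1 : p ≤ 1) (hε : 0 < ε)
    (hN : 1 ≤ N10 G) (s : ℝ) (hs : s = 1 ∨ s = -1) :
    FPS.Ex (fun (_ : G.edgeFinset) b => if b then p else 1 - p)
      (fun ω => if ε * (N10 G : ℝ) ≤ s * ((Y10 G ω : ℝ) - p ^ 6 * (N10 G : ℝ))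
        then (1:ℝ) else 0) ≤
      Real.exp (-2 * ε ^ 2 * (N10 G : ℝ) / (k10 G : ℝ)) := by
  set w : G.edgeFinset → Bool → ℝ := fun _ b => if b then p else 1 - p with hw
  have hw0 : ∀ i b, 0 ≤ w i b := by
    intro i b
    cases b <;> simp [hw] <;> linarith
  have hkk : 0 < k10 G := one_le_k10 G hN
  have hkkR : (0:ℝ) < (k10 G : ℝ) := by exact_mod_cast hkk
  set c : ℝ := 4 * ε / (k10 G : ℝ) with hc
  have hc0 : 0 ≤ c := by positivity
  set θ : ℝ := p ^ 6 with hθ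
  set Nr : ℝ := (N10 G : ℝ) with hNr
  set K : ℝ := -(c * s * (θ * Nr)) - c * ε * Nr with hK
  have hpt : ∀ ω, (if ε * Nr ≤ s * ((Y10 G ω : ℝ) - θ * Nr) then (1:ℝ) else 0) ≤
      Real.exp K * Real.exp ((c * s) * (Y10 G ω : ℝ)) := by
    intro ω
    rw [← Real.exp_add]
    have harg : K + (c * s) * (Y10 G ω : ℝ) =
        c * (s * ((Y10 G ω : ℝ) - θ * Nr) - ε * Nr) := by rw [hK]; ring
    rw [harg]
    split_ifs with h
    · have h0 : 0 ≤ c * (s * ((Y10 G ω : ℝ) - θ * Nr) - ε * Nr) :=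
        mul_nonneg hc0 (by linarith)
      exact Real.one_le_exp h0
    · exact (Real.exp_pos _).le
  calc FPS.Ex w (fun ω => if ε * Nr ≤ s * ((Y10 G ω : ℝ) - θ * Nr) then (1:ℝ) else 0)
      ≤ FPS.Ex w (fun ω => Real.exp K * Real.exp ((c * s) * (Y10 G ω : ℝ))) :=
        FPS.Ex_mono hw0 hpt
    _ = Real.exp K * FPS.Ex w (fun ω => Real.exp ((c * s) * (Y10 G ω : ℝ))) :=
        FPS.Ex_smul w _ _
    _ ≤ Real.exp K * Real.exp ((c * s) * θ * Nr + (k10 G : ℝ) * (c * s) ^ 2 / 8 * Nr) := by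
        refine mul_le_mul_of_nonneg_left ?_ (Real.exp_pos _).le
        exact mgf_bound G p hp0.le hp1 hN (c * s)
    _ = Real.exp (K + ((c * s) * θ * Nr + (k10 G : ℝ) * (c * s) ^ 2 / 8 * Nr)) :=
        (Real.exp_add _ _).symm
    _ = Real.exp (-2 * ε ^ 2 * Nr / (k10 G : ℝ)) := by
        congr 1
        have hkne : (k10 G : ℝ) ≠ 0 := ne_of_gt hkkR
        rw [hK, hc]
        rcases hs with rfl | rfl <;> (field_simp; ring)

theorem statement1_aux (p ε : ℝ) (hp0 : 0 < p) (hp1 : p ≤ 1) (hε : 0 < ε)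
    (hN : 1 ≤ N10 G) :
    prob G p (fun ω => ε * (N10 G : ℝ) ≤ |(Y10 G ω : ℝ) - p ^ 6 * (N10 G : ℝ)|) ≤
      2 * Real.exp (-2 * ε ^ 2 * (N10 G : ℝ) / (k10 G : ℝ)) := by
  classical
  set w : G.edgeFinset → Bool → ℝ := fun _ b => if b then p else 1 - p with hw
  have hw0 : ∀ i b, 0 ≤ w i b := by
    intro i b
    cases b <;> simp [hw] <;> linarith
  have h1 := tail_bound G p ε hp0 hp1 hε hN 1 (Or.inl rfl)
  have h2 := tail_bound G p ε hp0 hp1 hε hN (-1) (Or.inr rfl)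
  rw [prob_eq_Ex]
  have hpt : ∀ ω : G.edgeFinset → Bool,
      (if ε * (N10 G : ℝ) ≤ |(Y10 G ω : ℝ) - p ^ 6 * (N10 G : ℝ)| then (1:ℝ) else 0) ≤
      (if ε * (N10 G : ℝ) ≤ 1 * ((Y10 G ω : ℝ) - p ^ 6 * (N10 G : ℝ)) then (1:ℝ) else 0) +
      (if ε * (N10 G : ℝ) ≤ (-1) * ((Y10 G ω : ℝ) - p ^ 6 * (N10 G : ℝ)) then (1:ℝ) else 0) := by
    intro ω
    set d : ℝ := (Y10 G ω : ℝ) - p ^ 6 * (N10 G : ℝ) with hd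
    by_cases h : ε * (N10 G : ℝ) ≤ |d|
    · rw [if_pos h]
      rcases le_abs.mp h with hcase | hcase
      · rw [if_pos (by rw [one_mul]; exact hcase)]
        have : (0:ℝ) ≤ (if ε * (N10 G : ℝ) ≤ (-1) * d then (1:ℝ) else 0) := by
          split_ifs <;> norm_num
        linarith
      · have hneg : ε * (N10 G : ℝ) ≤ (-1) * d := by rw [neg_one_mul]; exact hcase
        rw [if_pos hneg]
        have : (0:ℝ) ≤ (if ε * (N10 G : ℝ) ≤ 1 * d then (1:ℝ) else 0) := by
          split_ifs <;> norm_num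
        linarith
    · rw [if_neg h]
      have ha : (0:ℝ) ≤ (if ε * (N10 G : ℝ) ≤ 1 * d then (1:ℝ) else 0) := by
        split_ifs <;> norm_num
      have hb : (0:ℝ) ≤ (if ε * (N10 G : ℝ) ≤ (-1) * d then (1:ℝ) else 0) := by
        split_ifs <;> norm_num
      linarith
  calc FPS.Ex w (fun ω =>
        if ε * (N10 G : ℝ) ≤ |(Y10 G ω : ℝ) - p ^ 6 * (N10 G : ℝ)| then (1:ℝ) else 0)
      ≤ FPS.Ex w (fun ω =>
        (if ε * (N10 G : ℝ) ≤ 1 * ((Y10 G ω : ℝ) - p ^ 6 * (N10 G : ℝ)) then (1:ℝ) else 0) +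
        (if ε * (N10 G : ℝ) ≤ (-1) * ((Y10 G ω : ℝ) - p ^ 6 * (N10 G : ℝ)) then (1:ℝ) else 0)) :=
        FPS.Ex_mono hw0 hpt
    _ = FPS.Ex w (fun ω =>
        (if ε * (N10 G : ℝ) ≤ 1 * ((Y10 G ω : ℝ) - p ^ 6 * (N10 G : ℝ)) then (1:ℝ) else 0)) +
        FPS.Ex w (fun ω =>
        (if ε * (N10 G : ℝ) ≤ (-1) * ((Y10 G ω : ℝ) - p ^ 6 * (N10 G : ℝ)) then (1:ℝ) else 0)) :=
        FPS.Ex_add w _ _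
    _ ≤ Real.exp (-2 * ε ^ 2 * (N10 G : ℝ) / (k10 G : ℝ)) +
        Real.exp (-2 * ε ^ 2 * (N10 G : ℝ) / (k10 G : ℝ)) := add_le_add h1 h2
    _ = 2 * Real.exp (-2 * ε ^ 2 * (N10 G : ℝ) / (k10 G : ℝ)) := (two_mul _).symm


end Assembly

theorem statement1 (G : SimpleGraph V) [DecidableRel G.Adj]
    (p ε : ℝ) (hp0 : 0 < p) (hp1 : p ≤ 1) (hε : 0 < ε)
    (hN : 1 ≤ N10 G) :
    prob G p (fun ω => ε * (N10 G : ℝ) ≤ |(Y10 G ω : ℝ) - p ^ 6 * (N10 G : ℝ)|) ≤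
      2 * Real.exp (-2 * ε ^ 2 * (N10 G : ℝ) / (k10 G : ℝ)) := by
  exact statement1_aux G p ε hp0 hp1 hε hN

end FourProfileSparsifier
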